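/- The total variation distance between Poisson distributions satisfies d_TV(Poi(t), Poi(t+x)) ≤ min{1 - e^{-x}, √(2/e)·(√(t+x) - √t)} for all t, x ≥ 0. -/

import Mathlib

open Real MeasureTheory

noncomputable def pp (lam : ℝ) (k : ℕ) : ℝ := Real.exp (-lam) * lam ^ k / k.factorial

lemma summable_pp (a : ℝ) : Summable (pp a) := by
  have := (Real.summable_pow_div_factorial a).mul_left (Real.exp (-a))
  refine this.congr fun k => ?_
  simp [pp, mul_div_assoc]

lemma tsum_pp (a : ℝ) : ∑' k, pp a k = 1 := by
  have h : ∑' k : ℕ, a ^ k / k.factorial = Real.exp a := by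
    rw [Real.exp_eq_exp_ℝ, NormedSpace.exp_eq_tsum_div]
  calc ∑' k, pp a k = Real.exp (-a) * ∑' k : ℕ, a ^ k / k.factorial := by
        rw [← tsum_mul_left]; simp [pp, mul_div_assoc]
    _ = 1 := by rw [h, ← Real.exp_add]; simp

lemma pp_nonneg {a : ℝ} (ha : 0 ≤ a) (k : ℕ) : 0 ≤ pp a k := by
  unfold pp
  have h1 : (0:ℝ) ≤ Real.exp (-a) := (Real.exp_pos _).le
  have h2 : (0:ℝ) ≤ a ^ k := pow_nonneg ha k
  positivity

lemma log_le_half_sub {y : ℝ} (hy : 1 ≤ y) : Real.log y ≤ (y - y⁻¹) / 2 := by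
  have h0 : 0 < y := by linarith
  have hl : 0 ≤ Real.log y := Real.log_nonneg hy
  have hs : Real.log y ≤ Real.sinh (Real.log y) := Real.self_le_sinh_iff.2 hl
  rwa [Real.sinh_eq, Real.exp_log h0, Real.exp_neg, Real.exp_log h0] at hs

lemma core_ineq {u : ℝ} (h0 : 0 ≤ u) (h1 : u < 1) :
    (1 + u) * Real.log (1 + u) - (1 - u) * Real.log (1 - u) ≤ 2 * u := by
  have hu1 : (0:ℝ) < 1 + u := by linarith
  have hu2 : (0:ℝ) < 1 - u := by linarith
  have b1 : Real.log (1 + u) ≤ ((1+u) - (1+u)⁻¹) / 2 := log_le_half_sub (by linarith)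
  have b2 : Real.log (1 - u)⁻¹ ≤ ((1-u)⁻¹ - ((1-u)⁻¹)⁻¹) / 2 := by
    apply log_le_half_sub
    rw [le_inv_comm₀ one_pos hu2]; linarith
  rw [Real.log_inv, inv_inv] at b2
  have e1 : (1 + u) * Real.log (1 + u) ≤ (1+u) * (((1+u) - (1+u)⁻¹) / 2) :=
    mul_le_mul_of_nonneg_left b1 (by linarith)
  have e2 : (1 - u) * (- Real.log (1 - u)) ≤ (1-u) * (((1-u)⁻¹ - (1-u)) / 2) :=
    mul_le_mul_of_nonneg_left b2 (by linarith)
  have k1 : (1+u) * (((1+u) - (1+u)⁻¹) / 2) = u * (2 + u) / 2 := by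
    field_simp; ring
  have k2 : (1-u) * (((1-u)⁻¹ - (1-u)) / 2) = u * (2 - u) / 2 := by
    field_simp; ring
  nlinarith [e1, e2]

lemma step_ineq {s : ℝ} (hs : 1 ≤ s) :
    (2*s+1) * Real.log (s+1/2) - (2*s-1) * Real.log (s-1/2) ≤ 2 * Real.log s + 2 := by
  set u : ℝ := 1/(2*s) with hu
  have hs0 : 0 < s := by linarith
  have hu0 : 0 < u := by positivity
  have hu1 : u < 1 := by rw [hu]; rw [div_lt_one (by linarith)]; linarith
  have hsu : s * u = 1/2 := by rw [hu]; field_simp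
  have h1 : s + 1/2 = s * (1+u) := by nlinarith [hsu]
  have h2 : s - 1/2 = s * (1-u) := by nlinarith [hsu]
  have l1 : Real.log (s+1/2) = Real.log s + Real.log (1+u) := by
    rw [h1, Real.log_mul (ne_of_gt hs0) (by positivity)]
  have l2 : Real.log (s-1/2) = Real.log s + Real.log (1-u) := by
    rw [h2, Real.log_mul (ne_of_gt hs0) (by nlinarith)]
  have core := core_ineq hu0.le hu1
  -- multiply core by 1/u = 2*s
  have hc : (1/u) * ((1 + u) * Real.log (1 + u) - (1 - u) * Real.log (1 - u)) ≤ (1/u) * (2*u) :=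
    mul_le_mul_of_nonneg_left core (by positivity)
  have h1u : 1/u = 2*s := by rw [hu]; field_simp
  have e1 : (1/u) * (1+u) = 2*s+1 := by linear_combination (1+u) * h1u + 2 * hsu
  have e2 : (1/u) * (1-u) = 2*s-1 := by linear_combination (1-u) * h1u - 2 * hsu
  have e3 : (1/u) * (2*u) = 2 := by field_simp
  have hc2 : (2*s+1) * Real.log (1+u) - (2*s-1) * Real.log (1-u) ≤ 2 := by
    calc (2*s+1) * Real.log (1+u) - (2*s-1) * Real.log (1-u)
        = (1/u) * ((1 + u) * Real.log (1 + u) - (1 - u) * Real.log (1 - u)) := by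
          rw [← e1, ← e2]; ring
      _ ≤ (1/u) * (2*u) := hc
      _ = 2 := e3
  rw [l1, l2]
  have expand : (2*s+1) * (Real.log s + Real.log (1+u)) - (2*s-1) * (Real.log s + Real.log (1-u))
      = 2 * Real.log s + ((2*s+1) * Real.log (1+u) - (2*s-1) * Real.log (1-u)) := by ring
  rw [expand]
  linarith [hc2]

lemma key_ineq (m : ℕ) :
    2 * ((m:ℝ)+1/2)^(2*m+1) ≤ (m.factorial:ℝ)^2 * Real.exp (2*m) := by
  induction m with
  | zero => norm_num
  | succ m ih =>
    set c : ℝ := (m:ℝ) + 1/2 with hc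
    have hc0 : 0 < c := by positivity
    have hstep : ((c+1):ℝ)^(2*m+3) ≤ ((m:ℝ)+1)^2 * Real.exp 2 * c^(2*m+1) := by
      have hA : (0:ℝ) < (c+1)^(2*m+3) := by positivity
      have hB : (0:ℝ) < ((m:ℝ)+1)^2 * Real.exp 2 * c^(2*m+1) := by positivity
      rw [← Real.log_le_log_iff hA hB]
      have s := step_ineq (s := (m:ℝ)+1) (by norm_num)
      rw [Real.log_pow, Real.log_mul (by positivity) (by positivity),
        Real.log_mul (by positivity) (Real.exp_ne_zero 2), Real.log_pow, Real.log_exp,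
        Real.log_pow]
      have r1 : ((m:ℝ)+1) + 1/2 = c + 1 := by rw [hc]; ring
      have r2 : ((m:ℝ)+1) - 1/2 = c := by rw [hc]; ring
      rw [r1, r2] at s
      push_cast
      nlinarith [s]
    have hfact : ((m+1).factorial : ℝ) = ((m:ℝ)+1) * m.factorial := by
      push_cast [Nat.factorial_succ]; ring
    have hexp : Real.exp (2*((m+1:ℕ):ℝ)) = Real.exp 2 * Real.exp (2*(m:ℝ)) := by
      rw [← Real.exp_add]; congr 1; push_cast; ring
    have goal_eq : (2:ℝ) * (((m+1:ℕ):ℝ)+1/2)^(2*(m+1)+1) = 2 * (c+1)^(2*m+3) := by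
      rw [hc]; push_cast; ring
    show (2:ℝ) * (((m+1:ℕ):ℝ)+1/2)^(2*(m+1)+1) ≤ ((m+1).factorial:ℝ)^2 * Real.exp (2*((m+1:ℕ):ℝ))
    rw [goal_eq, hfact, hexp]
    calc (2:ℝ) * (c+1)^(2*m+3)
        ≤ 2 * (((m:ℝ)+1)^2 * Real.exp 2 * c^(2*m+1)) := by nlinarith [hstep]
      _ = ((m:ℝ)+1)^2 * Real.exp 2 * (2 * c^(2*m+1)) := by ring
      _ ≤ ((m:ℝ)+1)^2 * Real.exp 2 * ((m.factorial:ℝ)^2 * Real.exp (2*(m:ℝ))) := by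
          apply mul_le_mul_of_nonneg_left ih (by positivity)
      _ = (((m:ℝ)+1) * (m.factorial:ℝ))^2 * (Real.exp 2 * Real.exp (2*(m:ℝ))) := by ring

lemma sqrt2_bound (m : ℕ) :
    Real.sqrt 2 * Real.exp (-(m:ℝ)) * ((m:ℝ)+1/2)^m * Real.sqrt ((m:ℝ)+1/2)
      ≤ (m.factorial : ℝ) := by
  set c : ℝ := (m:ℝ) + 1/2 with hcdef
  have hc0 : 0 < c := by positivity
  have h := Real.sqrt_le_sqrt (key_ineq m)
  have lhs_eq : Real.sqrt (2 * c^(2*m+1)) = Real.sqrt 2 * c^m * Real.sqrt c := by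
    rw [show c^(2*m+1) = (c^m)^2 * c by ring, Real.sqrt_mul (by norm_num),
      Real.sqrt_mul (by positivity), Real.sqrt_sq (by positivity), mul_assoc]
  have rhs_eq : Real.sqrt ((m.factorial:ℝ)^2 * Real.exp (2*m)) =
      (m.factorial : ℝ) * Real.exp (m:ℝ) := by
    rw [Real.sqrt_mul (by positivity), Real.sqrt_sq (by positivity),
      show Real.exp (2*(m:ℝ)) = (Real.exp (m:ℝ))^2 by rw [sq, ← Real.exp_add]; congr 1; ring,
      Real.sqrt_sq (Real.exp_nonneg _)]
  rw [lhs_eq, rhs_eq] at h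
  have he : 0 < Real.exp (m:ℝ) := Real.exp_pos _
  have h2 := mul_le_mul_of_nonneg_right h (inv_nonneg.mpr he.le)
  calc Real.sqrt 2 * Real.exp (-(m:ℝ)) * c^m * Real.sqrt c
      = Real.sqrt 2 * c^m * Real.sqrt c * (Real.exp (m:ℝ))⁻¹ := by rw [Real.exp_neg]; ring
    _ ≤ (m.factorial:ℝ) * Real.exp (m:ℝ) * (Real.exp (m:ℝ))⁻¹ := h2
    _ = (m.factorial:ℝ) := by field_simp

lemma pmf_max {m : ℕ} {l : ℝ} (hl : 0 < l) :
    pp l m ≤ (Real.sqrt (2 * Real.exp 1))⁻¹ * l ^ (-(1/2) : ℝ) := by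
  set c : ℝ := (m:ℝ) + 1/2 with hcdef
  have hc0 : 0 < c := by positivity
  clear_value c
  -- step B : exp(-l) * l^m * sqrt l ≤ exp(-c) * c^m * sqrt c
  have hB : Real.exp (-l) * l^m * Real.sqrt l ≤ Real.exp (-c) * c^m * Real.sqrt c := by
    have hlog : Real.log (l/c) ≤ l/c - 1 := Real.log_le_sub_one_of_pos (by positivity)
    rw [Real.log_div (ne_of_gt hl) (ne_of_gt hc0)] at hlog
    have hkey : c * Real.log l - l ≤ c * Real.log c - c := by
      have hlog2 : c * (Real.log l - Real.log c) ≤ c * (l/c - 1) :=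
        mul_le_mul_of_nonneg_left hlog hc0.le
      have hid : c * (l/c - 1) = l - c := by field_simp
      rw [hid] at hlog2
      nlinarith [hlog2]
    have hL : (0:ℝ) < Real.exp (-l) * l^m * Real.sqrt l := by positivity
    have hR : (0:ℝ) < Real.exp (-c) * c^m * Real.sqrt c := by positivity
    rw [← Real.log_le_log_iff hL hR]
    rw [Real.log_mul (by positivity) (by positivity), Real.log_mul (by positivity) (by positivity),
      Real.log_mul (by positivity) (by positivity), Real.log_mul (by positivity) (by positivity),
      Real.log_exp, Real.log_exp, Real.log_pow, Real.log_pow,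
      Real.log_sqrt hl.le, Real.log_sqrt hc0.le]
    have hm : (m:ℝ) = c - 1/2 := by rw [hcdef]; ring
    rw [hm]
    have g1 : -l + ((c - 1/2) * Real.log l + Real.log l / 2) = c * Real.log l - l := by ring
    have g2 : -c + ((c - 1/2) * Real.log c + Real.log c / 2) = c * Real.log c - c := by ring
    nlinarith [hkey, g1, g2]
  -- rewrite target
  have hrw : l ^ (-(1/2) : ℝ) = (Real.sqrt l)⁻¹ := by
    rw [Real.rpow_neg hl.le, Real.sqrt_eq_rpow]
  rw [hrw]
  have hsl : 0 < Real.sqrt l := Real.sqrt_pos.2 hl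
  have hse : 0 < Real.sqrt (2 * Real.exp 1) := Real.sqrt_pos.2 (by positivity)
  have hfact : (0:ℝ) < m.factorial := by exact_mod_cast m.factorial_pos
  rw [pp, div_le_iff₀ hfact]
  have goal2 : Real.exp (-l) * l ^ m * (Real.sqrt (2 * Real.exp 1) * Real.sqrt l)
      ≤ (m.factorial : ℝ) := by
    have hsqrt2e : Real.sqrt (2 * Real.exp 1) = Real.sqrt 2 * Real.exp (1/2 : ℝ) := by
      rw [Real.sqrt_mul (by norm_num), Real.exp_half]
    rw [hsqrt2e]
    have step : Real.exp (-l) * l ^ m * Real.sqrt l * (Real.sqrt 2 * Real.exp (1/2:ℝ))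
        ≤ Real.exp (-c) * c ^ m * Real.sqrt c * (Real.sqrt 2 * Real.exp (1/2:ℝ)) := by
      apply mul_le_mul_of_nonneg_right hB (by positivity)
    have hce : Real.exp (-c) * Real.exp (1/2:ℝ) = Real.exp (-(m:ℝ)) := by
      rw [← Real.exp_add]; congr 1; rw [hcdef]; ring
    calc Real.exp (-l) * l ^ m * (Real.sqrt 2 * Real.exp (1/2:ℝ) * Real.sqrt l)
        = Real.exp (-l) * l ^ m * Real.sqrt l * (Real.sqrt 2 * Real.exp (1/2:ℝ)) := by ring
      _ ≤ Real.exp (-c) * c ^ m * Real.sqrt c * (Real.sqrt 2 * Real.exp (1/2:ℝ)) := step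
      _ = Real.sqrt 2 * (Real.exp (-c) * Real.exp (1/2:ℝ)) * c ^ m * Real.sqrt c := by ring
      _ = Real.sqrt 2 * Real.exp (-(m:ℝ)) * c ^ m * Real.sqrt c := by rw [hce]
      _ ≤ (m.factorial : ℝ) := by rw [hcdef]; exact sqrt2_bound m
  calc Real.exp (-l) * l ^ m
      = (Real.exp (-l) * l ^ m * (Real.sqrt (2 * Real.exp 1) * Real.sqrt l))
        * ((Real.sqrt (2 * Real.exp 1) * Real.sqrt l))⁻¹ := by
        field_simp
    _ ≤ (m.factorial : ℝ) * ((Real.sqrt (2 * Real.exp 1) * Real.sqrt l))⁻¹ := by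
        apply mul_le_mul_of_nonneg_right goal2 (by positivity)
    _ = (Real.sqrt (2 * Real.exp 1))⁻¹ * (Real.sqrt l)⁻¹ * (m.factorial:ℝ) := by
        rw [mul_inv]; ring

lemma continuous_pp (m : ℕ) : Continuous (fun l => pp l m) := by
  unfold pp
  fun_prop

lemma hasDerivAt_ppsum (m : ℕ) (l : ℝ) :
    HasDerivAt (fun y => ∑ k ∈ Finset.range (m+1), pp y k) (-(pp l m)) l := by
  have hterm : ∀ k : ℕ, HasDerivAt (fun y => pp y k)
      (Real.exp (-l) * (k * l^(k-1)) / k.factorial - pp l k) l := by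
    intro k
    have hexp : HasDerivAt (fun y : ℝ => Real.exp (-y)) (-Real.exp (-l)) l := by
      convert (hasDerivAt_neg l).exp using 1; ring
    have hpow : HasDerivAt (fun y : ℝ => y ^ k) ((k:ℝ) * l^(k-1)) l := hasDerivAt_pow k l
    have hmul := hexp.mul hpow
    have := hmul.div_const (k.factorial : ℝ)
    refine this.congr_deriv ?_
    unfold pp
    field_simp
    ring
  have hsum : HasDerivAt (fun y => ∑ k ∈ Finset.range (m+1), pp y k)
      (∑ k ∈ Finset.range (m+1), (Real.exp (-l) * (k * l^(k-1)) / k.factorial - pp l k)) l :=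
    HasDerivAt.fun_sum (fun k _ => hterm k)
  convert hsum using 1
  rw [Finset.sum_sub_distrib]
  have c_eq : ∑ k ∈ Finset.range (m+1), Real.exp (-l) * (k * l^(k-1)) / k.factorial
      = ∑ k ∈ Finset.range m, pp l k := by
    rw [Finset.sum_range_succ']
    have c0 : Real.exp (-l) * ((0:ℕ) * l^(0-1)) / (Nat.factorial 0) = 0 := by simp
    rw [c0, add_zero]
    apply Finset.sum_congr rfl
    intro i _
    unfold pp
    rw [Nat.factorial_succ]
    push_cast
    have : (i:ℝ) + 1 ≠ 0 := by positivity
    field_simp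
  rw [c_eq, Finset.sum_range_succ]
  ring

lemma sum_eq_integral (m : ℕ) (a b : ℝ) :
    (∑ k ∈ Finset.range (m+1), pp a k) - (∑ k ∈ Finset.range (m+1), pp b k)
      = ∫ l in a..b, pp l m := by
  have hftc : (∫ l in a..b, -(pp l m))
      = (∑ k ∈ Finset.range (m+1), pp b k) - (∑ k ∈ Finset.range (m+1), pp a k) := by
    apply intervalIntegral.integral_eq_sub_of_hasDerivAt
    · exact fun l _ => hasDerivAt_ppsum m l
    · exact ((continuous_pp m).neg).intervalIntegrable a b
  rw [intervalIntegral.integral_neg] at hftc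
  linarith

lemma integral_bound (m : ℕ) {a b : ℝ} (ha : 0 ≤ a) (hab : a ≤ b) :
    (∫ l in a..b, pp l m) ≤ Real.sqrt (2 / Real.exp 1) * (Real.sqrt b - Real.sqrt a) := by
  set G : ℝ → ℝ := fun l => (Real.sqrt (2 * Real.exp 1))⁻¹ * l ^ (-(1/2) : ℝ) with hG
  have i1 : IntervalIntegrable (fun l => pp l m) volume a b :=
    (continuous_pp m).intervalIntegrable a b
  have i2 : IntervalIntegrable G volume a b := by
    exact (intervalIntegral.intervalIntegrable_rpow' (by norm_num)).const_mul _
  have hmono : (∫ l in a..b, pp l m) ≤ ∫ l in a..b, G l := by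
    apply intervalIntegral.integral_mono_ae_restrict hab i1 i2
    have h0 : ∀ᵐ l : ℝ ∂volume, l ≠ 0 := by
      have : volume ({0} : Set ℝ) = 0 := Real.volume_singleton
      exact compl_mem_ae_iff.2 this
    filter_upwards [ae_restrict_of_ae h0, ae_restrict_mem measurableSet_Icc] with l hl0 hlmem
    have hl : 0 < l := lt_of_le_of_ne (le_trans ha hlmem.1) (Ne.symm hl0)
    exact pmf_max hl
  have hcalc : (∫ l in a..b, G l)
      = Real.sqrt (2 / Real.exp 1) * (Real.sqrt b - Real.sqrt a) := by
    rw [hG]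
    rw [intervalIntegral.integral_const_mul]
    rw [integral_rpow (Or.inl (by norm_num))]
    have e1 : (-(1/2) : ℝ) + 1 = 1/2 := by norm_num
    rw [e1]
    rw [← Real.sqrt_eq_rpow, ← Real.sqrt_eq_rpow]
    have h2 : Real.sqrt (2 / Real.exp 1) * Real.sqrt (2 * Real.exp 1) = 2 := by
      rw [← Real.sqrt_mul (by positivity)]
      rw [show (2 / Real.exp 1) * (2 * Real.exp 1) = 4 by field_simp; ring]
      rw [show (4:ℝ) = 2^2 by norm_num, Real.sqrt_sq (by norm_num)]
    have hse : 0 < Real.sqrt (2 * Real.exp 1) := Real.sqrt_pos.2 (by positivity)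
    have h3 : Real.sqrt (2 / Real.exp 1) = 2 / Real.sqrt (2 * Real.exp 1) := by
      rw [eq_div_iff hse.ne']; exact h2
    rw [h3]
    field_simp
  rw [← hcalc]
  exact hmono

/-- The probability that `Poi(λ)` lands in the set `A ⊆ ℕ`. -/
noncomputable def poiProb (lam : ℝ) (A : Set ℕ) : ℝ :=
  ∑' k : ℕ, A.indicator (fun k => Real.exp (-lam) * lam ^ k / k.factorial) k

lemma poiProb_eq (lam : ℝ) (A : Set ℕ) : poiProb lam A = ∑' k, A.indicator (pp lam) k := rfl

lemma poiProb_compl (lam : ℝ) (A : Set ℕ) : poiProb lam A + poiProb lam Aᶜ = 1 := by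
  rw [poiProb_eq, poiProb_eq, ← Summable.tsum_add ((summable_pp lam).indicator A)
    ((summable_pp lam).indicator Aᶜ)]
  rw [← tsum_pp lam]
  congr 1
  ext k
  have := Set.indicator_self_add_compl A (pp lam)
  exact congrFun this k

lemma pp_le_iff {a b : ℝ} (ha : 0 < a) (hab : a ≤ b) (k : ℕ) :
    pp b k ≤ pp a k ↔ (k:ℝ) * (Real.log b - Real.log a) ≤ b - a := by
  unfold pp
  have hb : 0 < b := lt_of_lt_of_le ha hab
  have hf : (0:ℝ) < k.factorial := by exact_mod_cast k.factorial_pos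
  rw [div_le_div_iff_of_pos_right hf]
  rw [← Real.log_le_log_iff (by positivity) (by positivity)]
  rw [Real.log_mul (by positivity) (by positivity), Real.log_mul (by positivity) (by positivity),
    Real.log_exp, Real.log_exp, Real.log_pow, Real.log_pow]
  constructor <;> intro h <;> linarith

lemma pp_ge_iff {a b : ℝ} (ha : 0 < a) (hab : a ≤ b) (k : ℕ) :
    pp a k ≤ pp b k ↔ b - a ≤ (k:ℝ) * (Real.log b - Real.log a) := by
  unfold pp
  have hb : 0 < b := lt_of_lt_of_le ha hab
  have hf : (0:ℝ) < k.factorial := by exact_mod_cast k.factorial_pos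
  rw [div_le_div_iff_of_pos_right hf]
  rw [← Real.log_le_log_iff (by positivity) (by positivity)]
  rw [Real.log_mul (by positivity) (by positivity), Real.log_mul (by positivity) (by positivity),
    Real.log_exp, Real.log_exp, Real.log_pow, Real.log_pow]
  constructor <;> intro h <;> linarith

lemma one_sided (t x : ℝ) (ht : 0 ≤ t) (hx : 0 ≤ x) (A : Set ℕ) :
    poiProb t A - poiProb (t + x) A
      ≤ min (1 - Real.exp (-x)) (Real.sqrt (2 / Real.exp 1) * (Real.sqrt (t + x) - Real.sqrt t)) := by
  set b : ℝ := t + x with hb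
  have htb : t ≤ b := by rw [hb]; linarith
  set m : ℕ := if t = 0 then 0 else ⌊x / Real.log (b / t)⌋₊ with hm
  -- sign conditions
  have sign_le : ∀ k : ℕ, k ≤ m → pp b k ≤ pp t k := by
    intro k hk
    rcases eq_or_lt_of_le ht with h0 | hpos
    · have : m = 0 := by rw [hm, if_pos h0.symm]
      have hk0 : k = 0 := le_antisymm (this ▸ hk) (Nat.zero_le k)
      subst hk0
      have e1 : pp b 0 = Real.exp (-b) := by unfold pp; simp
      have e2 : pp t 0 = 1 := by unfold pp; rw [← h0]; simp
      rw [e1, e2]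
      exact Real.exp_le_one_iff.2 (by rw [hb]; linarith)
    · rw [pp_le_iff hpos htb]
      have hL : 0 ≤ Real.log b - Real.log t :=
        sub_nonneg.2 (Real.log_le_log hpos htb)
      have hmval : m = ⌊x / Real.log (b / t)⌋₊ := by rw [hm, if_neg (ne_of_gt hpos)]
      rcases eq_or_lt_of_le hL with hL0 | hLpos
      · have : (k:ℝ) * (Real.log b - Real.log t) = 0 := by rw [← hL0]; ring
        rw [this]; rw [hb]; linarith
      · have hlogdiv : Real.log (b / t) = Real.log b - Real.log t :=
          Real.log_div (by positivity) (ne_of_gt hpos)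
        have hkle : (k:ℝ) ≤ x / Real.log (b / t) := by
          calc (k:ℝ) ≤ (m:ℝ) := by exact_mod_cast hk
            _ ≤ x / Real.log (b / t) := by
                rw [hmval]
                apply Nat.floor_le
                rw [hlogdiv]
                positivity
        rw [hlogdiv] at hkle
        calc (k:ℝ) * (Real.log b - Real.log t)
            ≤ (x / (Real.log b - Real.log t)) * (Real.log b - Real.log t) :=
              mul_le_mul_of_nonneg_right hkle hL
          _ = x := by field_simp
          _ = b - t := by rw [hb]; ring
  have sign_ge : ∀ k : ℕ, m < k → pp t k ≤ pp b k := by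
    intro k hk
    rcases eq_or_lt_of_le ht with h0 | hpos
    · have hk0 : k ≠ 0 := by omega
      have : pp t k = 0 := by
        unfold pp
        rw [← h0, zero_pow hk0]
        simp
      rw [this]
      exact pp_nonneg (by linarith) k
    · rcases eq_or_lt_of_le hx with hx0 | hxpos
      · have : b = t := by rw [hb, ← hx0]; ring
        rw [this]
      · have hbt : 1 < b / t := by
          rw [lt_div_iff₀ hpos]
          rw [hb]; linarith
        have hLpos : 0 < Real.log (b / t) := Real.log_pos hbt
        have hlogdiv : Real.log (b / t) = Real.log b - Real.log t :=
          Real.log_div (by positivity) (ne_of_gt hpos)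
        have hmval : m = ⌊x / Real.log (b / t)⌋₊ := by rw [hm, if_neg (ne_of_gt hpos)]
        have hfloor : x / Real.log (b / t) < (m:ℝ) + 1 := by
          rw [hmval]; exact Nat.lt_floor_add_one _
        have hkgt : x / Real.log (b / t) < (k:ℝ) := by
          calc x / Real.log (b / t) < (m:ℝ) + 1 := hfloor
            _ ≤ (k:ℝ) := by exact_mod_cast hk
        have := (div_lt_iff₀ hLpos).1 hkgt
        have hgoal : b - t ≤ (k:ℝ) * (Real.log b - Real.log t) := by
          rw [← hlogdiv, hb]
          linarith [this]
        exact (pp_ge_iff hpos htb k).2 hgoal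
  -- main estimates
  set S : Finset ℕ := Finset.range (m+1) with hS
  set g : ℕ → ℝ := fun k => pp t k - pp b k with hg
  have hgsum : Summable g := (summable_pp t).sub (summable_pp b)
  have h1 : poiProb t A - poiProb b A = ∑' k, A.indicator g k := by
    rw [poiProb_eq, poiProb_eq,
      ← Summable.tsum_sub ((summable_pp t).indicator A) ((summable_pp b).indicator A)]
    congr 1
    ext k
    by_cases hkA : k ∈ A <;> simp [Set.indicator_apply, hkA, hg]
  have h2 : ∀ k, A.indicator g k ≤ (↑S : Set ℕ).indicator g k := by
    intro k
    by_cases hkS : k ∈ S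
    · by_cases hkA : k ∈ A
      · simp [Set.indicator_apply, hkA, hkS]
      · have hkm : k ≤ m := by
          have := Finset.mem_range.1 (hS ▸ hkS)
          omega
        have hnn := sign_le k hkm
        rw [Set.indicator_of_notMem hkA, Set.indicator_of_mem (Finset.mem_coe.2 hkS)]
        simp only [hg]
        linarith
    · by_cases hkA : k ∈ A
      · have hkm : m < k := by
          have := Finset.mem_range.not.1 (fun h => hkS (hS ▸ h))
          omega
        have hnn := sign_ge k hkm
        rw [Set.indicator_of_mem hkA, Set.indicator_of_notMem (fun h => hkS (Finset.mem_coe.1 h))]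
        simp only [hg]
        linarith
      · simp [Set.indicator_apply, hkA, hkS]
  have h3 := Summable.tsum_le_tsum h2 (hgsum.indicator A) (hgsum.indicator ↑S)
  have h4 : ∑' k, (↑S : Set ℕ).indicator g k = ∑ k ∈ S, g k := by
    rw [← tsum_subtype]
    exact Finset.tsum_subtype S g
  have h5 : ∑ k ∈ S, g k = ∫ l in t..b, pp l m := by
    rw [hg, hS]
    rw [Finset.sum_sub_distrib]
    exact sum_eq_integral m t b
  have hB2 : ∑ k ∈ S, g k ≤ Real.sqrt (2 / Real.exp 1) * (Real.sqrt b - Real.sqrt t) := by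
    rw [h5]
    exact integral_bound m ht htb
  have hB1 : ∑ k ∈ S, g k ≤ 1 - Real.exp (-x) := by
    have hterm : ∀ k ∈ S, g k ≤ (1 - Real.exp (-x)) * pp t k := by
      intro k _
      have hp : t^k ≤ b^k := pow_le_pow_left₀ ht htb k
      have hxp : Real.exp (-x) * pp t k ≤ pp b k := by
        have e1 : pp b k = Real.exp (-x) * (Real.exp (-t) * b ^ k / k.factorial) := by
          unfold pp
          rw [hb, show -(t+x) = -x + -t by ring, Real.exp_add]
          ring
        rw [e1]
        unfold pp
        gcongr
      simp only [hg]
      have := pp_nonneg ht k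
      nlinarith [hxp]
    have hsum1 : ∑ k ∈ S, pp t k ≤ 1 := by
      rw [← tsum_pp t]
      exact Summable.sum_le_tsum S (fun k _ => pp_nonneg ht k) (summable_pp t)
    have hxnn : 0 ≤ 1 - Real.exp (-x) := by
      have := Real.exp_le_one_iff.2 (show -x ≤ 0 by linarith)
      linarith
    calc ∑ k ∈ S, g k ≤ ∑ k ∈ S, (1 - Real.exp (-x)) * pp t k := Finset.sum_le_sum hterm
      _ = (1 - Real.exp (-x)) * ∑ k ∈ S, pp t k := by rw [← Finset.mul_sum]
      _ ≤ (1 - Real.exp (-x)) * 1 := mul_le_mul_of_nonneg_left hsum1 hxnn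
      _ = 1 - Real.exp (-x) := by ring
  rw [h1]
  apply le_min
  · linarith [h3, h4 ▸ h3]
  · linarith [h4 ▸ h3]

/-- The total variation distance between two Poisson distributions satisfies
`d_TV(Poi(t), Poi(t+x)) ≤ min(1 - e^{-x}, √(2/e)(√(t+x) - √t))` for `t, x ≥ 0`. -/
theorem poisson_tv_bound (t x : ℝ) (ht : 0 ≤ t) (hx : 0 ≤ x) :
    (⨆ A : Set ℕ, |poiProb t A - poiProb (t + x) A|)
      ≤ min (1 - Real.exp (-x)) (Real.sqrt (2 / Real.exp 1) * (Real.sqrt (t + x) - Real.sqrt t)) := by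
  have hmin : 0 ≤ min (1 - Real.exp (-x))
      (Real.sqrt (2 / Real.exp 1) * (Real.sqrt (t + x) - Real.sqrt t)) := by
    apply le_min
    · have := Real.exp_le_one_iff.2 (show -x ≤ 0 by linarith)
      linarith
    · apply mul_nonneg (Real.sqrt_nonneg _)
      have := Real.sqrt_le_sqrt (show t ≤ t + x by linarith)
      linarith
  apply Real.iSup_le _ hmin
  intro A
  rw [abs_sub_le_iff]
  constructor
  · exact one_sided t x ht hx A
  · have hA := poiProb_compl t A
    have hB := poiProb_compl (t + x) A
    have := one_sided t x ht hx Aᶜ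
    linarith
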